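/- In the chord-space model with μ ∈ ℂ, define the deformed annihilation operators ã_{R,0} = a_{R,0} + μW and ã_{R,1} = a_{R,1}. Then they satisfy the same generalized q-deformed oscillator relations as the undeformed operators: for all i, j ∈ {0,1}, ã_{R,i} ∘ a†_{R,j} − Q(i,j)·(a†_{R,j} ∘ ã_{R,i}) = δ_{ij}·id as linear operators on V. -/
import Mathlib


namespace DSSYK

/-- Binary strings (chord words); the letter `0` is `false`, the letter `1` is `true`. -/
abbrev Str : Type := List Bool

/-- The chord space: finitely supported complex functions on binary strings. -/
abbrev Sp : Type := Str →₀ ℂ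

/-- Crossing weights: `Q 0 0 = q`, `Q 1 1 = q_m`, mixed crossings give `r`. -/
def Qmat (q qm r : ℝ) : Bool → Bool → ℂ
  | false, false => (q : ℂ)
  | true,  true  => (qm : ℂ)
  | _,     _     => (r : ℂ)

/-- Right creation `a†_{R,i}`: append the letter `i` on the right. -/
noncomputable def creR (i : Bool) : Sp →ₗ[ℂ] Sp :=
  Finsupp.lift Sp ℂ Str fun w => Finsupp.single (w ++ [i]) 1

/-- Value of the right annihilation operator on a basis string: delete one letter
equal to `i`, weighted by the crossing factors with all letters to its right. -/
noncomputable def annVecR (Q : Bool → Bool → ℂ) (i : Bool) : Str → Sp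
  | [] => 0
  | x :: t =>
      (if x = i then ((t.map (Q i)).prod) • Finsupp.single t (1 : ℂ) else 0)
        + Finsupp.mapDomain (List.cons x) (annVecR Q i t)

/-- Right annihilation `a_{R,i}`. -/
noncomputable def annR (Q : Bool → Bool → ℂ) (i : Bool) : Sp →ₗ[ℂ] Sp :=
  Finsupp.lift Sp ℂ Str (annVecR Q i)

/-- Left creation `a†_{L,i}`: prepend the letter `i`. -/
noncomputable def creL (i : Bool) : Sp →ₗ[ℂ] Sp :=
  Finsupp.lift Sp ℂ Str fun w => Finsupp.single (i :: w) 1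

/-- Value of the left annihilation operator on a basis string: delete one letter
equal to `i`, weighted by the crossing factors with all letters to its left. -/
noncomputable def annVecL (Q : Bool → Bool → ℂ) (i : Bool) : Str → Sp
  | [] => 0
  | x :: t =>
      (if x = i then Finsupp.single t (1 : ℂ) else 0)
        + Q i x • Finsupp.mapDomain (List.cons x) (annVecL Q i t)

/-- Left annihilation `a_{L,i}`. -/
noncomputable def annL (Q : Bool → Bool → ℂ) (i : Bool) : Sp →ₗ[ℂ] Sp :=
  Finsupp.lift Sp ℂ Str (annVecL Q i)

/-- Diagonal weight operator `δ_w ↦ c₀^{N₀(w)} · c₁^{N₁(w)} · δ_w`, where `N₀, N₁`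
count the `0`'s and `1`'s in `w`. -/
noncomputable def Wgen (c₀ c₁ : ℂ) : Sp →ₗ[ℂ] Sp :=
  Finsupp.lift Sp ℂ Str fun w =>
    Finsupp.single w (c₀ ^ (w.count false) * c₁ ^ (w.count true))

/-- The chord-counting weight operator `W δ_w = q^{N₀(w)} r^{N₁(w)} δ_w`. -/
noncomputable def Wop (q r : ℝ) : Sp →ₗ[ℂ] Sp := Wgen (q : ℂ) (r : ℂ)

/-- Right boundary operators `H_{R,i} = a_{R,i} + a†_{R,i}`. -/
noncomputable def HR (Q : Bool → Bool → ℂ) (i : Bool) : Sp →ₗ[ℂ] Sp := annR Q i + creR i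

/-- Left boundary operators `H_{L,i} = a_{L,i} + a†_{L,i}`. -/
noncomputable def HL (Q : Bool → Bool → ℂ) (i : Bool) : Sp →ₗ[ℂ] Sp := annL Q i + creL i

/-- The vacuum `ω = δ_{[]}` (the empty string). -/
noncomputable def vac : Sp := Finsupp.single [] 1

/-- `ε v = v([])`, the coefficient of the empty string. -/
def eps (v : Sp) : ℂ := v []

end DSSYK

namespace DSSYK

/-- The EoW-brane deformed annihilation operators:
`ã_{R,0} = a_{R,0} + μ·W`, `ã_{R,1} = a_{R,1}`. -/
noncomputable def annRdef (q qm r : ℝ) (μ : ℂ) (i : Bool) : Sp →ₗ[ℂ] Sp :=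
  annR (Qmat q qm r) i + if i = false then μ • Wop q r else 0

end DSSYK

namespace DSSYK

lemma lift_single (f : Str → Sp) (w : Str) (c : ℂ) :
    (Finsupp.lift Sp ℂ Str f) (Finsupp.single w c) = c • f w := by
  simp [Finsupp.lift_apply, Finsupp.sum_single_index]

lemma creR_single (i : Bool) (w : Str) (c : ℂ) :
    creR i (Finsupp.single w c) = c • Finsupp.single (w ++ [i]) 1 :=
  lift_single _ w c

lemma annR_single (Q : Bool → Bool → ℂ) (i : Bool) (w : Str) (c : ℂ) :
    annR Q i (Finsupp.single w c) = c • annVecR Q i w :=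
  lift_single _ w c

lemma Wop_single (q r : ℝ) (w : Str) (c : ℂ) :
    Wop q r (Finsupp.single w c)
      = c • Finsupp.single w ((q:ℂ) ^ (w.count false) * (r:ℂ) ^ (w.count true)) :=
  lift_single _ w c

lemma creR_eq_mapDomain (j : Bool) (v : Sp) :
    creR j v = Finsupp.mapDomain (fun l : Str => l ++ [j]) v := by
  simp [creR, Finsupp.lift_apply, Finsupp.mapDomain, Finsupp.smul_single']

lemma mapDomain_cons_append (x j : Bool) (v : Sp) :
    Finsupp.mapDomain (List.cons x) (Finsupp.mapDomain (fun l : Str => l ++ [j]) v)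
      = Finsupp.mapDomain (fun l : Str => l ++ [j]) (Finsupp.mapDomain (List.cons x) v) := by
  rw [← Finsupp.mapDomain_comp, ← Finsupp.mapDomain_comp]
  rfl

lemma annVecR_append (Q : Bool → Bool → ℂ) (i j : Bool) (w : Str) :
    annVecR Q i (w ++ [j]) =
      (if i = j then Finsupp.single w 1 else 0)
        + Q i j • Finsupp.mapDomain (· ++ [j]) (annVecR Q i w) := by
  induction w with
  | nil => simp [annVecR, eq_comm]
  | cons x t ih =>
    show annVecR Q i (x :: (t ++ [j])) = _
    rw [annVecR, ih, annVecR, Finsupp.mapDomain_add, Finsupp.mapDomain_add,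
      Finsupp.mapDomain_smul, mapDomain_cons_append]
    by_cases hij : i = j
    · subst hij
      by_cases hx : x = i
      · simp only [hx, if_pos rfl, Finsupp.mapDomain_single,
          Finsupp.mapDomain_smul, Finsupp.mapDomain_zero, List.map_append,
          List.map_cons, List.map_nil, List.prod_append, List.prod_cons,
          List.prod_nil, mul_one, reduceIte, add_zero, zero_add, smul_zero] <;> module
      · simp only [if_neg hx, if_pos rfl, Finsupp.mapDomain_single,
          Finsupp.mapDomain_smul, Finsupp.mapDomain_zero, List.map_append,
          List.map_cons, List.map_nil, List.prod_append, List.prod_cons,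
          List.prod_nil, mul_one, reduceIte, add_zero, zero_add, smul_zero] <;> module
    · by_cases hx : x = i
      · simp only [hx, if_pos rfl, if_neg hij, Finsupp.mapDomain_single,
          Finsupp.mapDomain_smul, Finsupp.mapDomain_zero, List.map_append,
          List.map_cons, List.map_nil, List.prod_append, List.prod_cons,
          List.prod_nil, mul_one, reduceIte, add_zero, zero_add, smul_zero] <;> module
      · simp only [if_neg hx, if_neg hij, Finsupp.mapDomain_single,
          Finsupp.mapDomain_smul, Finsupp.mapDomain_zero, List.map_append,
          List.map_cons, List.map_nil, List.prod_append, List.prod_cons,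
          List.prod_nil, mul_one, reduceIte, add_zero, zero_add, smul_zero] <;> module

lemma annR_creR (Q : Bool → Bool → ℂ) (i j : Bool) :
    annR Q i ∘ₗ creR j - Q i j • (creR j ∘ₗ annR Q i)
      = if i = j then (LinearMap.id : Sp →ₗ[ℂ] Sp) else 0 := by
  refine Finsupp.lhom_ext fun w c => ?_
  simp only [LinearMap.sub_apply, LinearMap.comp_apply, LinearMap.smul_apply,
    creR_single, annR_single, map_smul, annVecR_append, creR_eq_mapDomain,
    Finsupp.mapDomain_single, smul_add, smul_smul]
  by_cases hij : i = j <;> simp [hij] <;> module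

lemma Wop_creR (q qm r : ℝ) (j : Bool) :
    Wop q r ∘ₗ creR j = Qmat q qm r false j • (creR j ∘ₗ Wop q r) := by
  refine Finsupp.lhom_ext fun w c => ?_
  simp only [LinearMap.comp_apply, LinearMap.smul_apply, creR_single, Wop_single,
    map_smul, one_smul, Finsupp.smul_single, smul_eq_mul, smul_smul]
  congr 1
  cases j <;> simp [Qmat, List.count_append, pow_succ] <;> ring

end DSSYK
open DSSYK in
/-- the deformed annihilation operators satisfy the same generalized
q-deformed oscillator relations as the undeformed ones:
`ã_{R,i} ∘ a†_{R,j} − Q(i,j)·(a†_{R,j} ∘ ã_{R,i}) = δ_{ij}·id`. -/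
theorem stmt_7 (q qm r : ℝ) (μ : ℂ) (i j : Bool) :
    annRdef q qm r μ i ∘ₗ creR j
        - Qmat q qm r i j • (creR j ∘ₗ annRdef q qm r μ i)
      = if i = j then (LinearMap.id : Sp →ₗ[ℂ] Sp) else 0 := by
  cases i with
  | true =>
      simpa [annRdef] using annR_creR (Qmat q qm r) true j
  | false =>
      have hd : annRdef q qm r μ false
          = annR (Qmat q qm r) false + μ • Wop q r := by simp [annRdef]
      rw [hd, LinearMap.add_comp, LinearMap.comp_add, smul_add, LinearMap.smul_comp,
        LinearMap.comp_smul, Wop_creR q qm r j, smul_comm μ, ← annR_creR (Qmat q qm r) false j]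
      abel
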